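/- Let m > 1 be an odd integer divisible by 3, and let E_m be the elliptic curve over ℚ defined by y² = x³ - x + m⁶. Let A = (k, l) and B = (x₀, y₀) be rational points on E_m. If k is an odd integer, then A ≠ 2B. -/

import Mathlib

open WeierstrassCurve.Affine

/-- The elliptic curve `E_m : y² = x³ - x + m⁶` over `ℚ`. -/
def Em (m : ℤ) : WeierstrassCurve ℚ := ⟨0, 0, 0, -1, (m : ℚ) ^ 6⟩

/-- Let `m > 1` be an odd integer divisible by `3` and let `A = (k, l)` and `B = (x₀, y₀)` be
rational points on `E_m : y² = x³ - x + m⁶`. If `k` is an odd integer, then `A ≠ 2B`. -/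
theorem Em_odd_x_not_double
    (m : ℤ) (hm : 1 < m) (hodd : Odd m) (h3 : (3 : ℤ) ∣ m)
    (k : ℤ) (hk : Odd k) (l x₀ y₀ : ℚ)
    (hA : (Em m).toAffine.Nonsingular (k : ℚ) l)
    (hB : (Em m).toAffine.Nonsingular x₀ y₀) :
    WeierstrassCurve.Affine.Point.some _ _ hA ≠ 2 • WeierstrassCurve.Affine.Point.some _ _ hB := by
  intro h
  rw [two_smul] at h
  by_cases hy : y₀ = (Em m).toAffine.negY x₀ y₀
  · rw [Point.add_of_Y_eq rfl hy] at h
    exact Point.some_ne_zero hA h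
  · rw [Point.add_of_Y_ne hy] at h
    have hx := (Point.some.inj h).left
    have ha₁ : (Em m).toAffine.a₁ = 0 := rfl
    have ha₂ : (Em m).toAffine.a₂ = 0 := rfl
    have ha₃ : (Em m).toAffine.a₃ = 0 := rfl
    have ha₄ : (Em m).toAffine.a₄ = -1 := rfl
    have ha₆ : (Em m).toAffine.a₆ = (m : ℚ)^6 := rfl
    have hy0 : y₀ ≠ 0 := by
      intro h0
      apply hy
      rw [WeierstrassCurve.Affine.negY, ha₁, ha₃, h0]
      ring
    have heq : y₀ ^ 2 = x₀ ^ 3 - x₀ + (m : ℚ) ^ 6 := by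
      have := hB.left
      rw [WeierstrassCurve.Affine.equation_iff, ha₁, ha₂, ha₃, ha₄, ha₆] at this
      linear_combination this
    rw [slope_of_Y_ne rfl hy, WeierstrassCurve.Affine.addX,
      WeierstrassCurve.Affine.negY, ha₁, ha₂, ha₃, ha₄] at hx
    field_simp [hy0] at hx
    have key2 : 4 * (k : ℚ) * (x₀ ^ 3 - x₀ + (m : ℚ) ^ 6)
        = (x₀ ^ 2 + 1) ^ 2 - 8 * (m : ℚ) ^ 6 * x₀ := by
      linear_combination hx - (4 * (k : ℚ) + 8 * x₀) * heq
    set p : ℤ := x₀.num with hp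
    set q : ℤ := (x₀.den : ℤ) with hqdef
    have hq0 : (q : ℚ) ≠ 0 := by
      simp [hqdef, x₀.den_nz]
    have hpq : x₀ = (p : ℚ) / (q : ℚ) := by
      rw [hp, hqdef]
      push_cast
      exact (Rat.num_div_den x₀).symm
    rw [hpq] at key2
    field_simp at key2
    have hZ : 4 * k * (p ^ 3 * q - p * q ^ 3 + m ^ 6 * q ^ 4)
        = (p ^ 2 + q ^ 2) ^ 2 - 8 * m ^ 6 * p * q ^ 3 := by
      have : ((4 * k * (p ^ 3 * q - p * q ^ 3 + m ^ 6 * q ^ 4) : ℤ) : ℚ)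
          = (((p ^ 2 + q ^ 2) ^ 2 - 8 * m ^ 6 * p * q ^ 3 : ℤ) : ℚ) := by
        push_cast
        have hq5 : (q : ℚ) ^ 5 ≠ 0 := pow_ne_zero _ hq0
        apply mul_right_cancel₀ hq5
        linear_combination (q : ℚ) ^ 5 * key2
      exact_mod_cast this
    have hm0 : ((m : ZMod 3)) = 0 := (ZMod.intCast_zmod_eq_zero_iff_dvd m 3).mpr h3
    have hmod := congrArg (fun z : ℤ => (z : ZMod 3)) hZ
    push_cast at hmod
    rw [hm0] at hmod
    have hdec : ∀ P Q K : ZMod 3,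
        4 * K * (P ^ 3 * Q - P * Q ^ 3 + 0 ^ 6 * Q ^ 4)
          = (P ^ 2 + Q ^ 2) ^ 2 - 8 * 0 ^ 6 * P * Q ^ 3 → P = 0 ∧ Q = 0 := by decide
    obtain ⟨hp0, hq0'⟩ := hdec _ _ _ hmod
    have hdp : (3 : ℤ) ∣ p := (ZMod.intCast_zmod_eq_zero_iff_dvd p 3).mp hp0
    have hdq : (3 : ℤ) ∣ q := (ZMod.intCast_zmod_eq_zero_iff_dvd q 3).mp hq0'
    have hdp' : 3 ∣ p.natAbs := by
      have := Int.natAbs_dvd_natAbs.mpr hdp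
      simpa using this
    have hdq' : 3 ∣ x₀.den := by
      rw [hqdef] at hdq
      exact_mod_cast hdq
    have hg : 3 ∣ Nat.gcd p.natAbs x₀.den := Nat.dvd_gcd hdp' hdq'
    rw [x₀.reduced] at hg
    omega
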